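/- Feasibility and rate identities of secure cache-aided piggyback coding II (achieving (R^(K_w+2), M^(K_w+2)) of Theorem 3): let K_w, K_s be positive integers, D ≥ 0 a real (the library size), and δ_s, δ_w, δ_z reals with 0 ≤ δ_s ≤ δ_w ≤ 1 and δ_s < δ_z ≤ 1. Set a := δ_z − δ_s, m := min{1 − δ_z, 1 − δ_w}, denom := K_s·m + K_w·a, β := K_w·a/denom, R_A := a·m/denom, and R_B := K_w·a²/(K_s·denom). Then: (i) R_A + R_B = a/K_s; (ii) D·R_B + R_A = (D·K_w·a² + K_s·a·m)/(K_s·denom); (iii) K_w·R_A ≤ β(1 − δ_w); (iv) K_w·R_A + K_s·R_B ≤ β(1 − δ_s); and (v) K_s·R_A = (1 − β)·a. -/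

import Mathlib

/-- Feasibility and rate identities of secure cache-aided piggyback coding II,
achieving (R^(K_w+2), M^(K_w+2)) of Theorem 3. -/
theorem stmt_19 (Kw Ks : ℕ) (hKw : 0 < Kw) (hKs : 0 < Ks)
    (D : ℝ) (hD : 0 ≤ D)
    (δs δw δz : ℝ) (hs0 : 0 ≤ δs) (hsw : δs ≤ δw) (hw1 : δw ≤ 1)
    (hsz : δs < δz) (hz1 : δz ≤ 1)
    (a m denom β RA RB : ℝ)
    (ha : a = δz - δs)
    (hm : m = min (1 - δz) (1 - δw))
    (hdenom : denom = Ks * m + Kw * a)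
    (hβ : β = Kw * a / denom)
    (hRA : RA = a * m / denom)
    (hRB : RB = Kw * a^2 / (Ks * denom)) :
    RA + RB = a / Ks
    ∧ D * RB + RA = (D * Kw * a^2 + Ks * a * m) / (Ks * denom)
    ∧ (Kw : ℝ) * RA ≤ β * (1 - δw)
    ∧ (Kw : ℝ) * RA + Ks * RB ≤ β * (1 - δs)
    ∧ (Ks : ℝ) * RA = (1 - β) * a := by
  have hKw' : (0:ℝ) < Kw := by exact_mod_cast hKw
  have hKs' : (0:ℝ) < Ks := by exact_mod_cast hKs
  have ha0 : 0 < a := by rw [ha]; linarith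
  have hm0 : 0 ≤ m := by rw [hm]; exact le_min (by linarith) (by linarith)
  have hd0 : 0 < denom := by
    rw [hdenom]; have := mul_nonneg hKs'.le hm0
    nlinarith [mul_pos hKw' ha0]
  have hmw : m ≤ 1 - δw := by rw [hm]; exact min_le_right _ _
  have hmz : m ≤ 1 - δz := by rw [hm]; exact min_le_left _ _
  refine ⟨?_, ?_, ?_, ?_, ?_⟩
  · rw [hRA, hRB, hdenom]
    field_simp
  · rw [hRA, hRB]
    field_simp
  · rw [hRA, hβ]
    have h1 : (Kw:ℝ) * (a * m / denom) = Kw * a * m / denom := by ring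
    rw [h1, div_mul_eq_mul_div]
    exact (div_le_div_iff_of_pos_right hd0).mpr (by nlinarith [mul_pos hKw' ha0])
  · rw [hRA, hRB, hβ]
    have h1 : (Kw:ℝ) * (a * m / denom) = Kw * a * m / denom := by ring
    have h2 : (Ks:ℝ) * (Kw * a^2 / (Ks * denom)) = Kw * a^2 / denom := by
      field_simp
    rw [h1, h2, ← add_div, div_mul_eq_mul_div]
    have h3 : m + a ≤ 1 - δs := by rw [ha]; linarith
    exact (div_le_div_iff_of_pos_right hd0).mpr (by nlinarith [mul_pos hKw' ha0])
  · rw [hRA, hβ]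
    field_simp
    rw [hdenom]; ring
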